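/- For a strictly positive probability mass function f_P on ℤ and the family f_{P'}^γ = (1−2γ)f_P + γ(shift by +1 of f_P) + γ(shift by −1 of f_P), the KL divergence D(f_P ‖ f_{P'}^γ) is o(γ) as γ → 0⁺; i.e., lim_{γ→0⁺} D(f_P ‖ f_{P'}^γ)/γ = 0. -/

import Mathlib

open Filter Topology

/-- Discrete Kullback–Leibler divergence on `ℤ`. -/
noncomputable def discKL (g f : ℤ → ℝ) : ℝ := ∑' n : ℤ, g n * Real.log (g n / f n)

/-- Nearest-neighbor smoothing of a PMF on `ℤ` with parameter `γ`. -/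
noncomputable def smoothPMF (f : ℤ → ℝ) (γ : ℝ) (n : ℤ) : ℝ :=
  (1 - 2 * γ) * f n + γ * (f (n - 1) + f (n + 1))

theorem stmt18 (f : ℤ → ℝ)
    (hpos : ∀ n, 0 < f n) (hsum : ∑' n : ℤ, f n = 1)
    (hKL : ∀ γ : ℝ, 0 < γ → γ < 1 / 2 →
      Summable (fun n : ℤ => f n * Real.log (f n / smoothPMF f γ n))) :
    Tendsto (fun γ : ℝ => discKL f (smoothPMF f γ) / γ) (𝓝[>] 0) (𝓝 0) := by
  -- basic summability
  have hS : Summable f := by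
    by_contra h
    rw [tsum_eq_zero_of_not_summable h] at hsum
    norm_num at hsum
  have hSm : Summable (fun n : ℤ => f (n - 1)) :=
    (Equiv.subRight (1 : ℤ)).summable_iff.mpr hS
  have hSp : Summable (fun n : ℤ => f (n + 1)) :=
    (Equiv.addRight (1 : ℤ)).summable_iff.mpr hS
  set c : ℤ → ℝ := fun n => f (n - 1) + f (n + 1) - 2 * f n with hc_def
  have hSc : Summable c := ((hSm.add hSp).sub (hS.mul_left 2))
  have htm : (∑' n : ℤ, f (n - 1)) = 1 := by
    rw [← hsum]; exact (Equiv.subRight (1 : ℤ)).tsum_eq f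
  have htp : (∑' n : ℤ, f (n + 1)) = 1 := by
    rw [← hsum]; exact (Equiv.addRight (1 : ℤ)).tsum_eq f
  have htc : (∑' n : ℤ, c n) = 0 := by
    simp only [hc_def]
    rw [Summable.tsum_sub (hSm.add hSp) (hS.mul_left 2), Summable.tsum_add hSm hSp, htm, htp,
      tsum_mul_left, hsum]
    ring
  -- smooth pmf basic facts
  have hsm_eq : ∀ γ : ℝ, ∀ n : ℤ, smoothPMF f γ n = f n + γ * c n := by
    intro γ n; simp only [smoothPMF, hc_def]; ring
  have hsm_pos : ∀ γ : ℝ, 0 < γ → γ < 1/2 → ∀ n : ℤ, 0 < smoothPMF f γ n := by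
    intro γ h1 h2 n
    have := hpos n; have := hpos (n-1); have := hpos (n+1)
    have : 0 < 1 - 2*γ := by linarith
    simp only [smoothPMF]
    positivity
  -- the per-term function
  set u : ℝ → ℤ → ℝ :=
    fun γ n => f n * Real.log (f n / smoothPMF f γ n) / γ + c n with hu_def
  set B : ℤ → ℝ := fun n => f (n - 1) + f (n + 1) + 2 * f n with hB_def
  have hSB : Summable B := (hSm.add hSp).add (hS.mul_left 2)
  clear_value c u B
  -- key per-term bounds for γ ∈ (0, 1/4)
  have hbound : ∀ γ : ℝ, 0 < γ → γ < 1/4 → ∀ n : ℤ,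
      0 ≤ u γ n ∧ u γ n ≤ γ * (c n)^2 / smoothPMF f γ n ∧
      γ * (c n)^2 / smoothPMF f γ n ≤ B n := by
    intro γ h1 h2 n
    have h2' : γ < 1/2 := by linarith
    have hfn := hpos n
    have hs := hsm_pos γ h1 h2' n
    have hse := hsm_eq γ n
    have hcge : c n ≥ -2 * f n := by
      have := hpos (n-1); have := hpos (n+1)
      simp only [hc_def]; linarith
    have hratio : 0 < smoothPMF f γ n / f n := div_pos hs hfn
    -- rewrite log(f/s) = -log(s/f)
    have hlog : Real.log (f n / smoothPMF f γ n)
        = - Real.log (smoothPMF f γ n / f n) := by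
      rw [← Real.log_inv]; congr 1
      rw [inv_div]
    -- upper and lower bounds on log(s/f)
    have hlogub : Real.log (smoothPMF f γ n / f n) ≤ γ * c n / f n := by
      have hlb := Real.log_le_sub_one_of_pos hratio
      have he : smoothPMF f γ n / f n - 1 = γ * c n / f n := by
        rw [hse]; field_simp; ring
      linarith
    have hloglb : 1 - f n / smoothPMF f γ n ≤ Real.log (smoothPMF f γ n / f n) := by
      have hinv : 0 < (smoothPMF f γ n / f n)⁻¹ := inv_pos.mpr hratio
      have := Real.log_le_sub_one_of_pos hinv
      rw [Real.log_inv] at this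
      have he : (smoothPMF f γ n / f n)⁻¹ = f n / smoothPMF f γ n := inv_div _ _
      rw [he] at this
      linarith
    -- w := numerator
    set w : ℝ := f n * Real.log (f n / smoothPMF f γ n) + γ * c n with hw_def
    clear_value w
    have hw_nonneg : 0 ≤ w := by
      rw [hw_def, hlog]
      have := mul_le_mul_of_nonneg_left hlogub hfn.le
      have he : f n * (γ * c n / f n) = γ * c n := by field_simp
      nlinarith
    have hw_ub : w * smoothPMF f γ n ≤ γ^2 * (c n)^2 := by
      rw [hw_def, hlog]
      have hlb' := mul_le_mul_of_nonneg_left hloglb hfn.le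
      -- f n * log(s/f) ≥ f n - f n^2 / s
      have he : f n * (1 - f n / smoothPMF f γ n) = f n - f n * f n / smoothPMF f γ n := by
        ring
      have key : (γ * c n - (f n - f n * f n / smoothPMF f γ n)) * smoothPMF f γ n
          = γ^2 * (c n)^2 := by
        have hs0 : smoothPMF f γ n ≠ 0 := hs.ne'
        field_simp
        rw [hse]; ring
      nlinarith [hs]
    have hu_eq : u γ n = w / γ := by
      rw [hu_def, hw_def]
      field_simp
    refine ⟨by rw [hu_eq]; exact div_nonneg hw_nonneg h1.le, ?_, ?_⟩
    · rw [hu_eq, div_le_div_iff₀ h1 hs]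
      calc w * smoothPMF f γ n ≤ γ^2 * (c n)^2 := hw_ub
        _ = γ * (c n)^2 * γ := by ring
    · rw [div_le_iff₀ hs]
      have hfm := hpos (n-1); have hfp := hpos (n+1)
      have hBc : B n = c n + 4 * f n := by simp only [hB_def, hc_def]; ring
      rw [hBc, hse]
      have key0 : 0 ≤ f n * ((1 + 4*γ) * c n + 4 * f n) := by
        have h4 : (1 + 4*γ) * (-2 * f n) ≤ (1 + 4*γ) * c n :=
          mul_le_mul_of_nonneg_left hcge (by linarith)
        nlinarith [mul_le_mul_of_nonneg_left h4 hfn.le, mul_pos hfn hfn,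
          mul_nonneg (mul_pos hfn hfn).le h1.le, sq_nonneg (f n)]
      nlinarith [key0]
  -- pointwise limits
  have hptw : ∀ n : ℤ, Tendsto (fun γ => u γ n) (𝓝[>] (0:ℝ)) (𝓝 0) := by
    intro n
    have hub : Tendsto (fun γ : ℝ => γ * (c n)^2 / smoothPMF f γ n) (𝓝[>] (0:ℝ)) (𝓝 0) := by
      have hnum : Tendsto (fun γ : ℝ => γ * (c n)^2) (𝓝 (0:ℝ)) (𝓝 0) := by
        have h := ((continuous_id.mul continuous_const :
          Continuous fun γ : ℝ => γ * (c n)^2)).tendsto 0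
        exact (continuous_id.mul continuous_const :
          Continuous fun γ : ℝ => γ * (c n)^2).tendsto' 0 0 (by simp)
      have hden : Tendsto (fun γ : ℝ => smoothPMF f γ n) (𝓝 (0:ℝ)) (𝓝 (f n)) := by
        have hcont : Continuous (fun γ : ℝ => (1 - 2*γ) * f n + γ * (f (n-1) + f (n+1))) :=
          ((continuous_const.sub (continuous_const.mul continuous_id)).mul
            continuous_const).add (continuous_id.mul continuous_const)
        have h0 : (1 - 2*(0:ℝ)) * f n + 0 * (f (n-1) + f (n+1)) = f n := by ring
        simpa only [smoothPMF, h0] using hcont.tendsto 0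
      have hd := (hnum.div hden (hpos n).ne').mono_left
        (nhdsWithin_le_nhds : 𝓝[>] (0:ℝ) ≤ 𝓝 0)
      rw [zero_div] at hd
      exact hd
    have hmem : ∀ᶠ γ in 𝓝[>] (0:ℝ), γ ∈ Set.Ioo (0:ℝ) (1/4) :=
      Ioo_mem_nhdsGT_of_mem ⟨le_refl _, by norm_num⟩
    refine tendsto_of_tendsto_of_tendsto_of_le_of_le' tendsto_const_nhds hub ?_ ?_
    · filter_upwards [hmem] with γ hγ
      exact (hbound γ hγ.1 hγ.2 n).1
    · filter_upwards [hmem] with γ hγ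
      exact (hbound γ hγ.1 hγ.2 n).2.1
  -- dominated convergence
  have hdom : Tendsto (fun γ : ℝ => ∑' n : ℤ, u γ n) (𝓝[>] (0:ℝ)) (𝓝 0) := by
    have hb : ∀ᶠ γ in 𝓝[>] (0:ℝ), ∀ n : ℤ, ‖u γ n‖ ≤ B n := by
      filter_upwards [Ioo_mem_nhdsGT_of_mem
        (⟨le_refl _, by norm_num⟩ : (0:ℝ) ∈ Set.Ico (0:ℝ) (1/4))] with γ hγ n
      obtain ⟨hb1, hb2, hb3⟩ := hbound γ hγ.1 hγ.2 n
      rw [Real.norm_eq_abs, abs_of_nonneg hb1]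
      linarith
    have := tendsto_tsum_of_dominated_convergence hSB hptw hb
    simpa only [tsum_zero] using this
  -- eventual equality between D/γ and the tsum
  have heq : ∀ᶠ γ in 𝓝[>] (0:ℝ),
      discKL f (smoothPMF f γ) / γ = ∑' n : ℤ, u γ n := by
    filter_upwards [Ioo_mem_nhdsGT_of_mem
      (⟨le_refl _, by norm_num⟩ : (0:ℝ) ∈ Set.Ico (0:ℝ) (1/2))] with γ hγ
    have hg := hKL γ hγ.1 hγ.2
    have : (∑' n : ℤ, u γ n)
        = (∑' n : ℤ, f n * Real.log (f n / smoothPMF f γ n) / γ) + ∑' n : ℤ, c n := by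
      simp only [hu_def]
      exact Summable.tsum_add (hg.div_const γ) hSc
    rw [this, htc, add_zero, tsum_div_const, discKL]
  exact hdom.congr' (heq.mono fun _ h => h.symm)
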